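/- arXiv:1301.6332 — 2 statements merged into one kernel-verified Lean document; each statement's English description precedes it below -/
import Mathlib

section
/- Let D be an integral domain with quotient field K, n a positive integer, and P a set of monic polynomials in D[X] of degree n. Let f = g/d ∈ K[X] with g ∈ D[X] and d ∈ D \ {0}. Then f belongs to Int(Mₙ^P(D), Mₙ(D)) if and only if for every p ∈ P, g lies in the ideal of D[X] generated by d and p. -/
open Polynomial

lemma minpoly_adjoinRoot_monic {D : Type*} [CommRing D] [IsDomain D] {p : D[X]} (hp : p.Monic) :
    minpoly D (AdjoinRoot.root p) = p := by
  refine (minpoly.unique' D _ hp (by simp [AdjoinRoot.aeval_eq]) ?_).symm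
  intro q hq
  rcases eq_or_ne q 0 with rfl | h0
  · exact Or.inl rfl
  · exact Or.inr (by rw [AdjoinRoot.aeval_eq]; exact AdjoinRoot.mk_ne_zero_of_degree_lt hp h0 hq)

lemma eval_rel {D K : Type*} [CommRing D] [Field K] [Algebra D K]
    {n : ℕ} (g : D[X]) (d : D) (f : K[X])
    (hf : f * C (algebraMap D K d) = g.map (algebraMap D K))
    (M : Matrix (Fin n) (Fin n) D) (i j : Fin n) :
    algebraMap D K ((Polynomial.aeval M g) i j)
      = algebraMap D K d * (Polynomial.aeval (M.map (algebraMap D K)) f) i j := by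
  have key : (Polynomial.aeval M g).map (algebraMap D K)
      = algebraMap D K d • Polynomial.aeval (M.map (algebraMap D K)) f := by
    have h1 : (Polynomial.aeval M g).map (algebraMap D K)
        = Polynomial.aeval (M.map (algebraMap D K)) g :=
      (Polynomial.aeval_algHom_apply ((Algebra.ofId D K).mapMatrix) M g).symm
    rw [h1, ← Polynomial.aeval_map_algebraMap K, ← hf]
    rw [map_mul, Polynomial.aeval_C, Algebra.algebraMap_eq_smul_one, mul_smul_comm, mul_one]
  have := congrArg (fun A => A i j) key
  simpa [Matrix.map_apply, Matrix.smul_apply, smul_eq_mul] using this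


/-- `IntOn D K S` is the set of polynomials `f ∈ K[X]` that are integer-valued on the set
`S ⊆ Mₙ(D)`: for every `M ∈ S`, evaluating `f` at the image of `M` in `Mₙ(K)` yields a matrix
all of whose entries lie in (the image of) `D`. -/
def IntOn (D K : Type*) [CommRing D] [Field K] [Algebra D K] {n : ℕ}
    (S : Set (Matrix (Fin n) (Fin n) D)) : Set (Polynomial K) :=
  {f | ∀ M ∈ S, ∀ i j, ∃ d : D,
    algebraMap D K d = (Polynomial.aeval (M.map (algebraMap D K)) f) i j}

/-- Let `D` be a domain with quotient field `K`, `n` positive and `P` a set of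
monic polynomials in `D[X]` of degree `n`.  Let `f = g/d ∈ K[X]` with `g ∈ D[X]`,
`d ∈ D \ {0}`.  Then `f ∈ Int(Mₙ^P(D), Mₙ(D))` iff for every `p ∈ P`, `g` lies in the ideal of
`D[X]` generated by `d` and `p`. -/
theorem mem_intOn_charpolySet_iff (D K : Type*) [CommRing D] [IsDomain D] [Field K]
    [Algebra D K] [IsFractionRing D K] (n : ℕ) (hn : 0 < n) (P : Set (Polynomial D))
    (hP : ∀ p ∈ P, p.Monic ∧ p.natDegree = n) (g : D[X]) (d : D) (hd : d ≠ 0) (f : K[X])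
    (hf : f * C (algebraMap D K d) = g.map (algebraMap D K)) :
    f ∈ IntOn D K {M : Matrix (Fin n) (Fin n) D | M.charpoly ∈ P} ↔
      ∀ p ∈ P, g ∈ Ideal.span {Polynomial.C d, p} := by
  have φinj : Function.Injective (algebraMap D K) := IsFractionRing.injective D K
  constructor
  · intro hmem p hpP
    obtain ⟨hpm, hpd⟩ := hP p hpP
    set pb := AdjoinRoot.powerBasis' hpm with hpb
    have hdim : pb.dim = n := hpd
    let e : Fin pb.dim ≃ Fin n := finCongr hdim
    set M₀ := Algebra.leftMulMatrix pb.basis pb.gen with hM₀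
    set M : Matrix (Fin n) (Fin n) D := Matrix.reindexAlgEquiv D D e M₀ with hM
    have hcharM0 : M₀.charpoly = p := by
      rw [hM₀, charpoly_leftMulMatrix, hpb, AdjoinRoot.powerBasis'_gen]
      exact minpoly_adjoinRoot_monic hpm
    have hchar : M.charpoly = p := by
      rw [hM, Matrix.reindexAlgEquiv_apply, Matrix.charpoly_reindex, hcharM0]
    have hMmem : M ∈ {M : Matrix (Fin n) (Fin n) D | M.charpoly ∈ P} := by
      rw [Set.mem_setOf_eq, hchar]; exact hpP
    have haevalM : Polynomial.aeval M g = Matrix.reindexAlgEquiv D D e (Polynomial.aeval M₀ g) := by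
      rw [hM]; exact Polynomial.aeval_algHom_apply (Matrix.reindexAlgEquiv D D e) M₀ g
    have hdvd : ∀ i j, d ∣ (Polynomial.aeval M₀ g) i j := by
      intro i j
      obtain ⟨c, hc⟩ := hmem M hMmem (e i) (e j)
      have h := eval_rel g d f hf M (e i) (e j)
      rw [← hc, ← map_mul] at h
      have h2 : (Polynomial.aeval M g) (e i) (e j) = d * c := φinj h
      rw [haevalM] at h2
      exact ⟨c, by simpa [Matrix.reindexAlgEquiv_apply, Matrix.reindex_apply,
        Matrix.submatrix_apply] using h2⟩
    set r := g %ₘ p with hr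
    have hrdeg : r.degree < p.degree := degree_modByMonic_lt g hpm
    have hp0 : Polynomial.aeval M₀ p = 0 := by
      have h4 := Matrix.aeval_self_charpoly M₀
      rwa [hcharM0] at h4
    have hroot : Polynomial.aeval M₀ r = Polynomial.aeval M₀ g := by
      conv_rhs => rw [← modByMonic_add_div g p]
      rw [map_add, map_mul, hp0, zero_mul, add_zero]
    have h0lt : (0:ℕ) < pb.dim := hdim ▸ hn
    have hcoeff : ∀ k : ℕ, d ∣ r.coeff k := by
      intro k
      by_cases hk : k < n
      · have hkd : k < pb.dim := hdim ▸ hk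
        have hentry : (Polynomial.aeval M₀ r) ⟨k, hkd⟩ ⟨0, h0lt⟩ = r.coeff k := by
          have h3 : Polynomial.aeval M₀ r
              = Algebra.leftMulMatrix pb.basis (Polynomial.aeval pb.gen r) := by
            rw [hM₀]
            exact Polynomial.aeval_algHom_apply (Algebra.leftMulMatrix pb.basis) pb.gen r
          rw [h3, Algebra.leftMulMatrix_eq_repr_mul]
          have hb0 : pb.basis ⟨0, h0lt⟩ = 1 := by
            rw [pb.basis_eq_pow]; simp
          rw [hb0, mul_one]
          have hgen : Polynomial.aeval pb.gen r = AdjoinRoot.mk p r := by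
            rw [hpb, AdjoinRoot.powerBasis'_gen, AdjoinRoot.aeval_eq]
          rw [hgen]
          have hrepr : (pb.basis.repr ((AdjoinRoot.mk p) r)) ⟨k, hkd⟩
              = (AdjoinRoot.modByMonicHom hpm ((AdjoinRoot.mk p) r)).coeff k := rfl
          rw [hrepr, AdjoinRoot.modByMonicHom_mk,
            (modByMonic_eq_self_iff hpm).mpr hrdeg]
        rw [← hentry, hroot]
        exact hdvd _ _
      · rw [coeff_eq_zero_of_degree_lt]
        · exact dvd_zero d
        · calc r.degree < p.degree := hrdeg
            _ = (n : WithBot ℕ) := by rw [degree_eq_natDegree hpm.ne_zero, hpd]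
            _ ≤ (k : WithBot ℕ) := by exact_mod_cast Nat.le_of_not_lt hk
    obtain ⟨s, hs⟩ := (Polynomial.C_dvd_iff_dvd_coeff d r).mpr hcoeff
    rw [Ideal.mem_span_pair]
    refine ⟨s, g /ₘ p, ?_⟩
    rw [mul_comm s, ← hs, mul_comm (g /ₘ p)]
    exact modByMonic_add_div g p
  · intro h M hM i j
    obtain ⟨a, b, hab⟩ := Ideal.mem_span_pair.mp (h M.charpoly hM)
    have hg : Polynomial.aeval M g = d • Polynomial.aeval M a := by
      rw [← hab, map_add, map_mul, map_mul, aeval_C, Matrix.aeval_self_charpoly, mul_zero,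
        add_zero, Algebra.algebraMap_eq_smul_one, mul_smul_comm, mul_one]
    refine ⟨(Polynomial.aeval M a) i j, ?_⟩
    have h1 := eval_rel g d f hf M i j
    rw [hg] at h1
    have hφd : algebraMap D K d ≠ 0 := fun hc => hd (φinj (hc.trans (map_zero _).symm))
    apply mul_left_cancel₀ hφd
    rw [← h1]
    simp [Matrix.smul_apply, smul_eq_mul, map_mul]
end

section
/- Let D be an integrally closed domain with quotient field K. Let g ∈ D[X], d ∈ D \ {0}, and let p ∈ D[X] be monic of degree n. Let α₁, …, αₙ be the roots of p (counted with multiplicity) in a splitting field F of p over K, and let D_F denote the integral closure of D in F. Then f = g/d belongs to Int(Mₙᵖ(D), Mₙ(D)) if and only if for every k with 0 ≤ k < n and every choice of indices i₀, …, i_k from {1, …, n} corresponding to a multi-subset of k+1 of the roots, the value Φᵏ(g)(α_{i₀}, …, α_{i_k}) lies in d·D_F. -/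
open Polynomial

/-- `IsDivDiff R Φ` says that the family `Φ` assigns to each polynomial `g ∈ R[X]` and each
`k ∈ ℕ` its `k`-th divided difference, the polynomial `Φᵏ(g) ∈ R[X₀,…,X_k]` characterized
recursively by `Φ⁰(g)(X₀) = g(X₀)` and
`Φᵏ(g)(X₀,…,X_k)·(X_{k−1} − X_k) = Φ^{k−1}(g)(X₀,…,X_{k−1}) − Φ^{k−1}(g)(X₀,…,X_{k−2},X_k)`. -/
def IsDivDiff (R : Type*) [CommRing R]
    (Φ : ∀ k : ℕ, Polynomial R → MvPolynomial (Fin (k + 1)) R) : Prop :=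
  (∀ g : Polynomial R, Φ 0 g = Polynomial.aeval (MvPolynomial.X 0) g) ∧
  (∀ (k : ℕ) (g : Polynomial R),
    Φ (k + 1) g *
        (MvPolynomial.X (Fin.castSucc (Fin.last k)) - MvPolynomial.X (Fin.last (k + 1))) =
      MvPolynomial.rename Fin.castSucc (Φ k g) -
        MvPolynomial.rename
          (fun i => if i = Fin.last k then Fin.last (k + 1) else Fin.castSucc i) (Φ k g))

section Auxiliary

variable {D : Type*} [CommRing D]

section NewtonExpansion

variable {A : Type*} [CommRing A] [Algebra D A]

/-- The fundamental "Newton expansion" identity satisfied by divided differences, proved by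
induction directly from the defining recursion. -/
lemma newton_aux {Φ : ∀ k : ℕ, Polynomial D → MvPolynomial (Fin (k + 1)) D}
    (hΦ : IsDivDiff D Φ) (g : D[X]) (x : ℕ → A) (z : A) (k : ℕ) :
    (MvPolynomial.aeval (fun i : Fin (k+1) => if (i:ℕ) < k then x i else z) (Φ k g))
        * ∏ i ∈ Finset.range k, (z - x i)
      = Polynomial.aeval z g - ∑ j ∈ Finset.range k,
          (MvPolynomial.aeval (fun i : Fin (j+1) => x i) (Φ j g))
            * ∏ i ∈ Finset.range j, (z - x i) := by
  induction k with
  | zero =>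
      simp only [Finset.range_zero, Finset.prod_empty, Finset.sum_empty, mul_one, sub_zero]
      rw [hΦ.1]
      rw [← Polynomial.aeval_algHom_apply]
      simp
  | succ k ih =>
      have hrec := congrArg (MvPolynomial.aeval
        (fun i : Fin (k+2) => if (i:ℕ) < k+1 then x i else z)) (hΦ.2 k g)
      simp only [map_mul, map_sub, MvPolynomial.aeval_X, MvPolynomial.aeval_rename] at hrec
      have h1 : ((fun i : Fin (k+2) => if (i:ℕ) < k+1 then x i else z) ∘ Fin.castSucc)
          = (fun i : Fin (k+1) => x i) := by
        funext i
        simp [Function.comp, Fin.is_lt, i.is_lt]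
      have h2 : ((fun i : Fin (k+2) => if (i:ℕ) < k+1 then x i else z) ∘
          (fun i => if i = Fin.last k then Fin.last (k + 1) else Fin.castSucc i))
          = (fun i : Fin (k+1) => if (i:ℕ) < k then x i else z) := by
        funext i
        by_cases h : i = Fin.last k
        · subst h; simp [Function.comp]
        · have hlt : (i : ℕ) < k := lt_of_le_of_ne (Nat.lt_succ_iff.mp i.is_lt)
            (fun hh => h (Fin.ext hh))
          simp [Function.comp, h, hlt, Nat.lt_succ_of_lt hlt]
      rw [h1, h2] at hrec
      have h3 : (if ((Fin.castSucc (Fin.last k) : Fin (k+2)) : ℕ) < k+1 then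
          x (Fin.castSucc (Fin.last k) : Fin (k+2)) else z) = x k := by simp
      have h4 : (if ((Fin.last (k+1) : Fin (k+2)) : ℕ) < k+1 then
          x ((Fin.last (k+1) : Fin (k+2)) : ℕ) else z) = z := by simp
      rw [h3, h4] at hrec
      rw [Finset.prod_range_succ, Finset.sum_range_succ]
      linear_combination (- ∏ i ∈ Finset.range k, (z - x i)) * hrec + ih

end NewtonExpansion

variable {F : Type*} [Field F] [Algebra D F]

lemma aeval_C_comp {m : ℕ} (β : Fin m → F) (q : MvPolynomial (Fin m) D) :
    (MvPolynomial.aeval (fun i => (C (β i) : F[X]))) q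
      = C ((MvPolynomial.aeval β) q) := by
  have := MvPolynomial.comp_aeval_apply (R := D) (f := β)
    ((Polynomial.CAlgHom (R := F) (A := F)).restrictScalars D) q
  simpa using this.symm

/-- Newton form of the remainder of `g` upon division by `p`, in terms of divided differences
of `g` at the roots of `p`. -/
lemma remainder_eq {Φ : ∀ k : ℕ, Polynomial D → MvPolynomial (Fin (k + 1)) D}
    (hΦ : IsDivDiff D Φ) (g p : D[X]) (hp : p.Monic) {n : ℕ} (hdeg : p.natDegree = n)
    (βe : ℕ → F)
    (hprod : p.map (algebraMap D F) = ∏ i ∈ Finset.range n, (X - C (βe i))) :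
    (g %ₘ p).map (algebraMap D F) = ∑ j ∈ Finset.range n,
      C ((MvPolynomial.aeval (fun i : Fin (j+1) => βe i)) (Φ j g))
        * ∏ i ∈ Finset.range j, (X - C (βe i)) := by
  have key := newton_aux hΦ g (fun i => (C (βe i) : F[X])) (X : F[X]) n
  have hgz : Polynomial.aeval (X : F[X]) g = g.map (algebraMap D F) := by
    rw [← Polynomial.aeval_map_algebraMap F, Polynomial.aeval_X_left_apply]
  rw [hgz] at key
  simp only [aeval_C_comp] at key
  set E : F[X] := ∑ j ∈ Finset.range n,
      C ((MvPolynomial.aeval (fun i : Fin (j+1) => βe i)) (Φ j g))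
        * ∏ i ∈ Finset.range j, (X - C (βe i)) with hE
  set Q : F[X] := (MvPolynomial.aeval fun i : Fin (n+1) =>
      if (i:ℕ) < n then (C (βe i) : F[X]) else X) (Φ n g) with hQ
  have hdegE : E.degree < (p.map (algebraMap D F)).degree := by
    rw [Polynomial.degree_eq_natDegree (hp.map (algebraMap D F)).ne_zero, hp.natDegree_map, hdeg]
    refine lt_of_le_of_lt (Polynomial.degree_sum_le _ _) ?_
    rw [Finset.sup_lt_iff (by exact_mod_cast WithBot.bot_lt_coe n)]
    intro j hj
    refine lt_of_le_of_lt (Polynomial.degree_mul_le _ _) ?_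
    have h1 : (∏ i ∈ Finset.range j, ((X:F[X]) - C (βe i))).degree = j := by
      rw [Polynomial.degree_prod]
      simp [Polynomial.degree_X_sub_C]
    calc (C ((MvPolynomial.aeval fun i : Fin (j+1) => βe i) (Φ j g))).degree
          + (∏ i ∈ Finset.range j, ((X:F[X]) - C (βe i))).degree
        ≤ 0 + (j : WithBot ℕ) := add_le_add Polynomial.degree_C_le (le_of_eq h1)
      _ = (j : WithBot ℕ) := zero_add _
      _ < (n : WithBot ℕ) := by exact_mod_cast Finset.mem_range.mp hj
  have huniq := Polynomial.div_modByMonic_unique (f := g.map (algebraMap D F)) Q E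
    (hp.map (algebraMap D F)) ⟨by rw [← hprod] at key; linear_combination key, hdegE⟩
  rw [Polynomial.map_modByMonic _ hp, huniq.2]

end Auxiliary

/-- Any two injections between finite index types are related by a permutation of the target. -/
lemma exists_perm_comp {m n : ℕ} (f g : Fin m → Fin n) (hf : Function.Injective f)
    (hg : Function.Injective g) : ∃ σ : Equiv.Perm (Fin n), ∀ i, σ (f i) = g i := by
  classical
  have hcard : Fintype.card ↥(Set.range f)ᶜ = Fintype.card ↥(Set.range g)ᶜ := by
    rw [Fintype.card_compl_set, Fintype.card_compl_set,
      Set.card_range_of_injective hf, Set.card_range_of_injective hg]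
  refine ⟨(Equiv.Set.sumCompl (Set.range f)).symm.trans
    ((Equiv.sumCongr ((Equiv.ofInjective f hf).symm.trans (Equiv.ofInjective g hg))
      (Fintype.equivOfCardEq hcard)).trans (Equiv.Set.sumCompl (Set.range g))), ?_⟩
  intro i
  simp only [Equiv.trans_apply]
  rw [Equiv.Set.sumCompl_symm_apply_of_mem (Set.mem_range_self i)]
  simp [Equiv.ofInjective_symm_apply]

section Companion

variable {D : Type*} [CommRing D]

/-- The companion matrix of a polynomial. -/
def compMat (n : ℕ) (p : D[X]) : Matrix (Fin n) (Fin n) D :=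
  Matrix.of fun i j => if (j : ℕ) + 1 < n then (if (i : ℕ) = (j : ℕ) + 1 then 1 else 0)
    else - p.coeff i

lemma compMat_pow_col {n : ℕ} (hn : 0 < n) (p : D[X]) {m : ℕ} (hm : m < n) (i : Fin n) :
    ((compMat n p) ^ m) i ⟨0, hn⟩ = if (i : ℕ) = m then 1 else 0 := by
  induction m generalizing i with
  | zero =>
      simp only [pow_zero, Matrix.one_apply]
      congr 1
      simp [Fin.ext_iff, eq_comm]
  | succ m ih =>
      rw [pow_succ', Matrix.mul_apply]
      rw [Finset.sum_eq_single (⟨m, Nat.lt_of_succ_lt hm⟩ : Fin n)]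
      · rw [ih (Nat.lt_of_succ_lt hm)]
        simp [compMat, hm]
      · intro b _ hb
        rw [ih (Nat.lt_of_succ_lt hm)]
        rw [if_neg (fun h => hb (Fin.ext h))]
        ring
      · intro h; exact absurd (Finset.mem_univ _) h

lemma compMat_aeval_col {n : ℕ} (hn : 0 < n) (p : D[X]) (r : D[X]) (hr : r.degree < n)
    (i : Fin n) : (Polynomial.aeval (compMat n p) r) i ⟨0, hn⟩ = r.coeff i := by
  have hmlt : ∀ m ≤ r.natDegree, m < n := by
    intro m hm
    rcases eq_or_ne r 0 with h | h
    · subst h; simpa using lt_of_le_of_lt (Nat.le_of_eq (by simpa using hm)) hn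
    · exact lt_of_le_of_lt hm ((natDegree_lt_iff_degree_lt h).mpr hr)
  rw [Polynomial.aeval_eq_sum_range]
  rw [Matrix.sum_apply]
  simp only [Matrix.smul_apply, smul_eq_mul]
  by_cases hi : (i : ℕ) < r.natDegree + 1
  · rw [Finset.sum_eq_single (i : ℕ)]
    · rw [compMat_pow_col hn p (hmlt i (Nat.lt_succ_iff.mp hi)), if_pos rfl, mul_one]
    · intro b hb hbi
      rw [compMat_pow_col hn p (hmlt b (Nat.lt_succ_iff.mp (Finset.mem_range.mp hb))),
        if_neg (fun h => hbi h.symm)]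
      ring
    · intro h; exact absurd (Finset.mem_range.mpr hi) h
  · rw [Finset.sum_eq_zero, eq_comm]
    · exact coeff_eq_zero_of_natDegree_lt (by omega)
    · intro b hb
      have hb' := Finset.mem_range.mp hb
      rw [compMat_pow_col hn p (hmlt b (Nat.lt_succ_iff.mp hb')),
        if_neg (by omega)]
      ring

lemma compMat_aeval_self {n : ℕ} (hn : 0 < n) (p : D[X]) (hp : p.Monic)
    (hdeg : p.natDegree = n) : Polynomial.aeval (compMat n p) p = 0 := by
  set C0 := compMat n p with hC0
  have hcol : ∀ i : Fin n, (Polynomial.aeval C0 p) i ⟨0, hn⟩ = 0 := by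
    intro i
    rw [Polynomial.aeval_eq_sum_range, Matrix.sum_apply]
    simp only [Matrix.smul_apply, smul_eq_mul]
    rw [hdeg, Finset.sum_range_succ]
    have hpow : (C0 ^ n) i ⟨0, hn⟩ = - p.coeff i := by
      have e : C0 ^ n = C0 * C0 ^ (n-1) := by rw [← pow_succ']; congr 1; omega
      rw [e, Matrix.mul_apply]
      rw [Finset.sum_eq_single (⟨n - 1, by omega⟩ : Fin n)]
      · rw [compMat_pow_col hn p (by omega), if_pos rfl, mul_one]
        simp [hC0, compMat, show ¬ (n - 1 + 1 < n) by omega]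
      · intro b _ hb
        rw [compMat_pow_col hn p (by omega),
          if_neg (by simpa [Fin.ext_iff] using fun h => hb (by simp [Fin.ext_iff, h]))]
        ring
      · intro h; exact absurd (Finset.mem_univ _) h
    have hcn : p.coeff n = 1 := by rw [← hdeg]; exact hp.coeff_natDegree
    rw [hpow, hcn]
    rw [Finset.sum_congr rfl (fun m hm => by
      rw [compMat_pow_col hn p (Finset.mem_range.mp hm)])]
    rw [Finset.sum_eq_single (i : ℕ)]
    · simp
    · intro b hb hbi; rw [if_neg (fun h => hbi h.symm)]; ring
    · intro h; exact absurd (Finset.mem_range.mpr i.is_lt) h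
  ext i j
  have hcomm : Polynomial.aeval C0 p * C0 ^ (j : ℕ) = C0 ^ (j : ℕ) * Polynomial.aeval C0 p := by
    rw [← Polynomial.aeval_X_pow (R := D) (x := C0), ← map_mul, ← map_mul, mul_comm]
  have h1 : (Polynomial.aeval C0 p * C0 ^ (j : ℕ)) i ⟨0, hn⟩ = (Polynomial.aeval C0 p) i j := by
    rw [Matrix.mul_apply, Finset.sum_eq_single j]
    · rw [compMat_pow_col hn p j.is_lt, if_pos rfl, mul_one]
    · intro b _ hb
      rw [compMat_pow_col hn p j.is_lt, if_neg (by simpa [Fin.ext_iff] using hb), mul_zero]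
    · intro h; exact absurd (Finset.mem_univ _) h
  have h2 : (C0 ^ (j : ℕ) * Polynomial.aeval C0 p) i ⟨0, hn⟩ = 0 := by
    rw [Matrix.mul_apply]
    exact Finset.sum_eq_zero fun b _ => by rw [hcol b, mul_zero]
  rw [Matrix.zero_apply, ← h1, hcomm, h2]

lemma compMat_charpoly [Nontrivial D] {n : ℕ} (hn : 0 < n) (p : D[X]) (hp : p.Monic)
    (hdeg : p.natDegree = n) : (compMat n p).charpoly = p := by
  have hcp : (compMat n p).charpoly.Monic := Matrix.charpoly_monic _
  have hcd : (compMat n p).charpoly.natDegree = n := by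
    simpa using Matrix.charpoly_natDegree_eq_dim (compMat n p)
  by_contra hne
  have hq : ((compMat n p).charpoly - p).degree < (n : WithBot ℕ) := by
    have := Polynomial.degree_sub_lt (p := (compMat n p).charpoly) (q := p)
      (by rw [Polynomial.degree_eq_natDegree hcp.ne_zero,
        Polynomial.degree_eq_natDegree hp.ne_zero, hcd, hdeg])
      hcp.ne_zero (by rw [hcp.leadingCoeff, hp.leadingCoeff])
    rwa [Polynomial.degree_eq_natDegree hcp.ne_zero, hcd] at this
  have haq : Polynomial.aeval (compMat n p) ((compMat n p).charpoly - p) = 0 := by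
    rw [map_sub, Matrix.aeval_self_charpoly, compMat_aeval_self hn p hp hdeg, sub_zero]
  apply hne
  rw [← sub_eq_zero]
  ext j
  by_cases hj : j < n
  · have := compMat_aeval_col hn p _ hq ⟨j, hj⟩
    rw [haq] at this
    simpa using this.symm
  · simp only [Polynomial.coeff_zero]
    exact Polynomial.coeff_eq_zero_of_degree_lt (lt_of_lt_of_le hq (by
      exact_mod_cast Nat.cast_le.mpr (le_of_not_gt hj)))

end Companion

section MoreAux

variable {D : Type*} [CommRing D]

lemma exists_sum_eq_mul {ι F : Type*} [CommRing F] [Algebra D F] (S : Subalgebra D F)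
    (s : Finset ι) (c : F) (f : ι → F) (h : ∀ x ∈ s, ∃ t ∈ S, f x = c * t) :
    ∃ t ∈ S, ∑ x ∈ s, f x = c * t := by
  classical
  induction s using Finset.induction with
  | empty => exact ⟨0, S.zero_mem, by simp⟩
  | @insert a s ha ih =>
      obtain ⟨t, ht, hft⟩ := h a (Finset.mem_insert_self a s)
      obtain ⟨u, hu, hfu⟩ := ih (fun x hx => h x (Finset.mem_insert_of_mem hx))
      exact ⟨t + u, S.add_mem ht hu, by rw [Finset.sum_insert ha, hft, hfu, mul_add]⟩

lemma aeval_matrix_map {K : Type*} [CommRing K] [Algebra D K] {n : ℕ}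
    (M : Matrix (Fin n) (Fin n) D) (h : D[X]) :
    Polynomial.aeval (M.map (algebraMap D K)) (h.map (algebraMap D K))
      = (Polynomial.aeval M h).map (algebraMap D K) := by
  have e : (algebraMap K (Matrix (Fin n) (Fin n) K)).comp (algebraMap D K)
      = ((algebraMap D K).mapMatrix).comp
          (algebraMap D (Matrix (Fin n) (Fin n) D)) := by
    ext a : 1
    ext i j
    simp [Matrix.algebraMap_matrix_apply, RingHom.mapMatrix_apply, Matrix.map_apply,
      apply_ite (algebraMap D K)]
  rw [Polynomial.aeval_def, Polynomial.eval₂_map, e]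
  rw [show M.map (algebraMap D K) = (algebraMap D K).mapMatrix M from rfl,
    ← Polynomial.hom_eval₂]
  rfl

lemma coeff_prod_X_sub_C_mem {F : Type*} [CommRing F] [Algebra D F] (β : ℕ → F)
    (hint : ∀ i, β i ∈ integralClosure D F) (j m : ℕ) :
    (∏ i ∈ Finset.range j, ((X : F[X]) - C (β i))).coeff m ∈ integralClosure D F := by
  set S := integralClosure D F
  set P : S[X] := ∏ i ∈ (Finset.range j).attach, ((X : S[X]) - C ⟨β i.1, hint i.1⟩) with hP
  have hmap : P.map (algebraMap S F) = ∏ i ∈ Finset.range j, ((X : F[X]) - C (β i)) := by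
    rw [hP, Polynomial.map_prod, ← Finset.prod_attach (Finset.range j)
      (fun i => ((X : F[X]) - C (β i)))]
    exact Finset.prod_congr rfl fun i _ => by
      rw [Polynomial.map_sub, Polynomial.map_X, Polynomial.map_C]; rfl
  rw [← hmap, Polynomial.coeff_map]
  exact (P.coeff m).2

end MoreAux

/-- Let `D` be an integrally closed domain with quotient field `K`, `g ∈ D[X]`,
`d ∈ D \ {0}` and `p ∈ D[X]` monic of degree `n`.  Let `α₁,…,αₙ` be the roots of `p` (with
multiplicity) in a splitting field `F` of `p` over `K`, and `D_F` the integral closure of `D`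
in `F`.  Then `f = g/d ∈ Int(Mₙᵖ(D), Mₙ(D))` iff for every `0 ≤ k < n` and every choice of
`k+1` distinct indices `i₀,…,i_k ∈ {1,…,n}`, the value `Φᵏ(g)(α_{i₀},…,α_{i_k})` lies in
`d·D_F`. -/
theorem mem_intOn_charpoly_iff_divDiff_integral (D K F : Type*) [CommRing D] [IsDomain D]
    [IsIntegrallyClosed D] [Field K] [Algebra D K] [IsFractionRing D K]
    [Field F] [Algebra K F] [Algebra D F] [IsScalarTower D K F]
    (Φ : ∀ k : ℕ, Polynomial D → MvPolynomial (Fin (k + 1)) D) (hΦ : IsDivDiff D Φ)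
    (n : ℕ) (hn : 0 < n) (p : D[X]) (hp : p.Monic) (hdeg : p.natDegree = n)
    (hF : Polynomial.IsSplittingField K F (p.map (algebraMap D K)))
    (α : Fin n → F) (hα : p.map (algebraMap D F) = ∏ i, (X - C (α i)))
    (g : D[X]) (d : D) (hd : d ≠ 0) (f : K[X])
    (hf : f * C (algebraMap D K d) = g.map (algebraMap D K)) :
    f ∈ IntOn D K {M : Matrix (Fin n) (Fin n) D | M.charpoly = p} ↔
      ∀ k, (hk : k < n) → ∀ ι : Fin (k + 1) → Fin n, Function.Injective ι →
        ∃ t ∈ integralClosure D F,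
          MvPolynomial.aeval (fun i => α (ι i)) (Φ k g) = algebraMap D F d * t := by
  classical
  have hK : Function.Injective (algebraMap D K) := IsFractionRing.injective D K
  have hKF : Function.Injective (algebraMap K F) := (algebraMap K F).injective
  have hDFeq : algebraMap D F = (algebraMap K F).comp (algebraMap D K) :=
    IsScalarTower.algebraMap_eq D K F
  have hDFinj : Function.Injective (algebraMap D F) := by
    rw [hDFeq]; exact hKF.comp hK
  have hdK : algebraMap D K d ≠ 0 := fun h => hd (hK (by simpa using h))
  have hdF : algebraMap D F d ≠ 0 := fun h => hd (hDFinj (by simpa using h))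
  set r := g %ₘ p with hrdef
  have hrdeg : r.degree < (n : WithBot ℕ) := by
    have := Polynomial.degree_modByMonic_lt g hp
    rwa [Polynomial.degree_eq_natDegree hp.ne_zero, hdeg] at this
  have hαint : ∀ i : Fin n, α i ∈ integralClosure D F := by
    intro i
    refine ⟨p, hp, ?_⟩
    rw [← Polynomial.eval_map, hα, Polynomial.eval_prod]
    exact Finset.prod_eq_zero (Finset.mem_univ i) (by simp)
  -- key evaluation identity on matrices with characteristic polynomial `p`
  have haeval : ∀ M : Matrix (Fin n) (Fin n) D, M.charpoly = p →
      (algebraMap D K d) • Polynomial.aeval (M.map (algebraMap D K)) f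
        = (Polynomial.aeval M r).map (algebraMap D K) := by
    intro M hM
    have hchar : (M.map (algebraMap D K)).charpoly = p.map (algebraMap D K) := by
      rw [Matrix.charpoly_map, hM]
    have hCH : Polynomial.aeval (M.map (algebraMap D K)) (p.map (algebraMap D K)) = 0 := by
      rw [← hchar]; exact Matrix.aeval_self_charpoly _
    have hsplit : g.map (algebraMap D K)
        = r.map (algebraMap D K)
            + (p.map (algebraMap D K)) * ((g /ₘ p).map (algebraMap D K)) := by
      rw [← Polynomial.map_mul, ← Polynomial.map_add, Polynomial.modByMonic_add_div g p]
    have h1 := congrArg (Polynomial.aeval (M.map (algebraMap D K))) hf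
    rw [map_mul, Polynomial.aeval_C, hsplit, map_add, map_mul, hCH, zero_mul, add_zero] at h1
    rw [aeval_matrix_map] at h1
    rw [Algebra.smul_def, ← h1]
    exact Algebra.commutes _ _
  have hsmul_inj : ∀ A B : Matrix (Fin n) (Fin n) K,
      (algebraMap D K d) • A = (algebraMap D K d) • B → A = B := fun A B h =>
    smul_right_injective _ hdK h
  -- membership is equivalent to `d` dividing every coefficient of the remainder `r`
  have bridge1 : (∀ m, d ∣ r.coeff m) →
      f ∈ IntOn D K {M : Matrix (Fin n) (Fin n) D | M.charpoly = p} := by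
    intro hdvd M hM i j
    obtain ⟨h, hh⟩ := (Polynomial.C_dvd_iff_dvd_coeff d r).mpr hdvd
    have key := haeval M hM
    have e1 : (Polynomial.aeval M r) = d • Polynomial.aeval M h := by
      rw [hh, map_mul, Polynomial.aeval_C, ← Algebra.smul_def]
    rw [e1] at key
    have e2 : (d • Polynomial.aeval M h).map (algebraMap D K)
        = (algebraMap D K d) • (Polynomial.aeval M h).map (algebraMap D K) := by
      ext a b
      simp [Matrix.map_apply, Matrix.smul_apply, smul_eq_mul, map_mul]
    rw [e2] at key
    rw [hsmul_inj _ _ key, Matrix.map_apply]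
    exact ⟨(Polynomial.aeval M h) i j, rfl⟩
  have bridge2 : f ∈ IntOn D K {M : Matrix (Fin n) (Fin n) D | M.charpoly = p} →
      ∀ m, d ∣ r.coeff m := by
    intro hmem m
    by_cases hm : m < n
    · have hC0 : (compMat n p).charpoly = p := compMat_charpoly hn p hp hdeg
      obtain ⟨c, hc⟩ := hmem (compMat n p) hC0 ⟨m, hm⟩ ⟨0, hn⟩
      have key := haeval (compMat n p) hC0
      have hentry := congrArg (fun A : Matrix (Fin n) (Fin n) K => A ⟨m, hm⟩ ⟨0, hn⟩) key
      simp only [Matrix.smul_apply, Matrix.map_apply] at hentry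
      rw [← hc, compMat_aeval_col hn p r hrdeg] at hentry
      refine ⟨c, hK ?_⟩
      rw [map_mul]
      rw [smul_eq_mul] at hentry
      exact hentry.symm
    · refine ⟨0, ?_⟩
      rw [mul_zero]
      exact Polynomial.coeff_eq_zero_of_degree_lt
        (lt_of_lt_of_le hrdeg (by exact_mod_cast Nat.cast_le.mpr (le_of_not_gt hm)))
  -- divided differences at root families lie in `d·D_F` once `d` divides the remainder
  have hTmem : ∀ βx : ℕ → F, (∀ i, βx i ∈ integralClosure D F) →
      (p.map (algebraMap D F) = ∏ i ∈ Finset.range n, (X - C (βx i))) →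
      (∀ m, d ∣ r.coeff m) → ∀ j, j < n →
      ∃ t ∈ integralClosure D F,
        (MvPolynomial.aeval (fun i : Fin (j+1) => βx i)) (Φ j g)
          = algebraMap D F d * t := by
    intro βx hβint hβprod hdvd
    set T : ∀ j : ℕ, F := fun j => (MvPolynomial.aeval (fun i : Fin (j+1) => βx i)) (Φ j g)
      with hT
    have hrem := remainder_eq hΦ g p hp hdeg βx hβprod
    have hcoeff : ∀ m, algebraMap D F (r.coeff m)
        = ∑ j ∈ Finset.range n,
            T j * (∏ i ∈ Finset.range j, ((X:F[X]) - C (βx i))).coeff m := by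
      intro m
      have h := congrArg (fun q : F[X] => q.coeff m) hrem
      simp only [Polynomial.finset_sum_coeff, Polynomial.coeff_C_mul,
        Polynomial.coeff_map] at h
      exact h
    have hQdeg : ∀ j, (∏ i ∈ Finset.range j, ((X:F[X]) - C (βx i))).natDegree = j := by
      intro j
      rw [Polynomial.natDegree_prod_of_monic _ _ (fun i _ => Polynomial.monic_X_sub_C _)]
      simp
    have main : ∀ s j, j < n → n ≤ j + s →
        ∃ t ∈ integralClosure D F, T j = algebraMap D F d * t := by
      intro s
      induction s with
      | zero => intro j hj hnj; omega
      | succ s ih =>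
          intro j hj hnj
          have heq := hcoeff j
          rw [← Finset.add_sum_erase _ _ (Finset.mem_range.mpr hj)] at heq
          have hterms : ∀ j' ∈ (Finset.range n).erase j, ∃ t ∈ integralClosure D F,
              T j' * (∏ i ∈ Finset.range j', ((X:F[X]) - C (βx i))).coeff j
                = algebraMap D F d * t := by
            intro j' hj'
            obtain ⟨hne, hj'r⟩ := Finset.mem_erase.mp hj'
            have hj'n := Finset.mem_range.mp hj'r
            rcases lt_or_gt_of_ne hne with hlt | hgt
            · have h0 : (∏ i ∈ Finset.range j', ((X:F[X]) - C (βx i))).coeff j = 0 :=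
                Polynomial.coeff_eq_zero_of_natDegree_lt (by rw [hQdeg]; exact hlt)
              exact ⟨0, zero_mem _, by rw [h0, mul_zero, mul_zero]⟩
            · obtain ⟨t, ht, hTt⟩ := ih j' hj'n (by omega)
              exact ⟨t * (∏ i ∈ Finset.range j', ((X:F[X]) - C (βx i))).coeff j,
                mul_mem ht (coeff_prod_X_sub_C_mem βx hβint j' j),
                by rw [hTt, mul_assoc]⟩
          obtain ⟨t, ht, hsum⟩ := exists_sum_eq_mul (integralClosure D F) _ _ _ hterms
          obtain ⟨c, hc⟩ := hdvd j
          have hMone : (∏ i ∈ Finset.range j, ((X:F[X]) - C (βx i))).coeff j = 1 := by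
            have := (Polynomial.monic_prod_of_monic _ _
              (fun i (_ : i ∈ Finset.range j) =>
                Polynomial.monic_X_sub_C (βx i))).coeff_natDegree
            rwa [hQdeg] at this
          refine ⟨algebraMap D F c - t, sub_mem (isIntegral_algebraMap) ht, ?_⟩
          rw [hMone, mul_one, hsum, hc, map_mul] at heq
          rw [mul_sub]
          linear_combination -heq
    exact fun j hj => main n j hj (by omega)
  constructor
  · -- membership implies the divided-difference condition
    intro hmem k hk ι hι
    have hdvd := bridge2 hmem
    obtain ⟨σ, hσ⟩ := exists_perm_comp (Fin.castLE hk) ι (Fin.castLE_injective hk) hι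
    set βσ : ℕ → F := fun i => if h : i < n then α (σ ⟨i, h⟩) else 0 with hβσ
    have hβσint : ∀ i, βσ i ∈ integralClosure D F := by
      intro i
      by_cases h : i < n
      · simp only [hβσ, dif_pos h]; exact hαint _
      · simp only [hβσ, dif_neg h]; exact zero_mem _
    have hβσprod : p.map (algebraMap D F) = ∏ i ∈ Finset.range n, (X - C (βσ i)) := by
      rw [hα, ← Equiv.prod_comp σ (fun i => X - C (α i)),
        ← Fin.prod_univ_eq_prod_range (fun i => (X : F[X]) - C (βσ i)) n]
      exact Finset.prod_congr rfl fun i _ => by simp [hβσ, i.is_lt]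
    obtain ⟨t, ht, hTt⟩ := hTmem βσ hβσint hβσprod hdvd k hk
    have hfun : (fun i : Fin (k+1) => βσ (i : ℕ)) = fun i => α (ι i) := by
      funext i
      have hi : (i : ℕ) < n := lt_of_lt_of_le i.is_lt hk
      simp only [hβσ, dif_pos hi]
      rw [show (⟨(i : ℕ), hi⟩ : Fin n) = Fin.castLE hk i from rfl, hσ]
    rw [hfun] at hTt
    exact ⟨t, ht, hTt⟩
  · -- the divided-difference condition implies membership
    intro hrhs
    apply bridge1
    intro m
    by_cases hm : m < n
    · set βa : ℕ → F := fun i => if h : i < n then α ⟨i, h⟩ else 0 with hβa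
      have hβaint : ∀ i, βa i ∈ integralClosure D F := by
        intro i
        by_cases h : i < n
        · simp only [hβa, dif_pos h]; exact hαint _
        · simp only [hβa, dif_neg h]; exact zero_mem _
      have hβaprod : p.map (algebraMap D F) = ∏ i ∈ Finset.range n, (X - C (βa i)) := by
        rw [hα, ← Fin.prod_univ_eq_prod_range (fun i => (X : F[X]) - C (βa i)) n]
        exact Finset.prod_congr rfl fun i _ => by simp [hβa, i.is_lt]
      have hrem := remainder_eq hΦ g p hp hdeg βa hβaprod
      have hcoeff : algebraMap D F (r.coeff m)
          = ∑ j ∈ Finset.range n,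
              (MvPolynomial.aeval (fun i : Fin (j+1) => βa i)) (Φ j g)
                * (∏ i ∈ Finset.range j, ((X:F[X]) - C (βa i))).coeff m := by
        have h := congrArg (fun q : F[X] => q.coeff m) hrem
        simp only [Polynomial.finset_sum_coeff, Polynomial.coeff_C_mul,
          Polynomial.coeff_map] at h
        exact h
      have hterms : ∀ j ∈ Finset.range n, ∃ t ∈ integralClosure D F,
          (MvPolynomial.aeval (fun i : Fin (j+1) => βa i)) (Φ j g)
              * (∏ i ∈ Finset.range j, ((X:F[X]) - C (βa i))).coeff m
            = algebraMap D F d * t := by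
        intro j hj
        have hjn := Finset.mem_range.mp hj
        obtain ⟨t, ht, hTt⟩ := hrhs j hjn (Fin.castLE hjn) (Fin.castLE_injective hjn)
        have hfun : (fun i : Fin (j+1) => βa (i : ℕ))
            = fun i => α (Fin.castLE hjn i) := by
          funext i
          have hi : (i : ℕ) < n := lt_of_lt_of_le i.is_lt hjn
          simp only [hβa, dif_pos hi]
          rfl
        rw [hfun, hTt]
        exact ⟨t * (∏ i ∈ Finset.range j, ((X:F[X]) - C (βa i))).coeff m,
          mul_mem ht (coeff_prod_X_sub_C_mem βa hβaint j m), by rw [mul_assoc]⟩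
      obtain ⟨s, hs, hsum⟩ := exists_sum_eq_mul (integralClosure D F) _ _ _ hterms
      rw [hsum] at hcoeff
      -- `s` is integral over `D` and lies in `K`, hence in `D`
      set κ : K := algebraMap D K (r.coeff m) / algebraMap D K d with hκdef
      have hdF' : algebraMap K F (algebraMap D K d) ≠ 0 := fun h =>
        hdF (by rw [hDFeq, RingHom.comp_apply]; exact h)
      have h2 : algebraMap K F (algebraMap D K (r.coeff m))
          = algebraMap K F (algebraMap D K d) * s := by
        rw [← RingHom.comp_apply, ← RingHom.comp_apply, ← hDFeq]
        exact hcoeff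
      have hκ : algebraMap K F κ = s := by
        rw [hκdef, map_div₀, h2, mul_comm, mul_div_assoc, div_self hdF', mul_one]
      have hκint : IsIntegral D κ := by
        rw [← isIntegral_algebraMap_iff hKF, hκ]
        exact hs
      obtain ⟨c, hc⟩ := IsIntegrallyClosed.isIntegral_iff.mp hκint
      refine ⟨c, hK ?_⟩
      rw [map_mul, hc, hκdef, mul_comm, div_mul_cancel₀ _ hdK]
    · refine ⟨0, ?_⟩
      rw [mul_zero]
      exact Polynomial.coeff_eq_zero_of_degree_lt
        (lt_of_lt_of_le hrdeg (by exact_mod_cast Nat.cast_le.mpr (le_of_not_gt hm)))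
end
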